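/- Let κ be a regular uncountable cardinal, θ < κ an infinite regular cardinal, S ⊆ κ a set of limit ordinals, and Ā = ⟨A_δ : δ ∈ S⟩, h̄ = ⟨h_δ : δ ∈ S⟩ sequences with A_δ ⊆ δ, |A_δ| < θ, sup(A_δ) = δ and h_δ : A_δ → θ. Let δ₀ < κ be a limit ordinal and ⟨g_i : i < δ₀⟩ a ≤-increasing sequence of conditions of the forcing notion Q^{S,θ}_{Ā,h̄} such that the supremum of the domains of the g_i is not in S. Then the union ⋃_{i<δ₀} g_i is a condition of Q^{S,θ}_{Ā,h̄}, hence an upper bound of the sequence. -/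

import Mathlib

/-- Conditions of the forcing notion `Q^{S,θ}_{Ā,h̄}`: pairs `(β, g)` with `β < κ`
representing a function `g : β → θ` such that for every `δ ∈ S` with `δ ≤ β` the set
`{ξ ∈ A_δ : h_δ ξ ≠ g ξ}` is bounded below `δ`. -/
def QSCond (κo θo : Ordinal.{0}) (S : Set Ordinal.{0}) (A : Ordinal.{0} → Set Ordinal.{0})
    (h : Ordinal.{0} → Ordinal.{0} → Ordinal.{0})
    (β : Ordinal.{0}) (g : Ordinal.{0} → Ordinal.{0}) : Prop :=
  β < κo ∧ (∀ ξ < β, g ξ < θo) ∧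
    ∀ δ ∈ S, δ ≤ β → ∃ γ < δ, ∀ ξ ∈ A δ, h δ ξ ≠ g ξ → ξ ≤ γ

/-- The order of `Q^{S,θ}_{Ā,h̄}` is extension of functions. -/
def QSLe (β₀ : Ordinal.{0}) (g₀ : Ordinal.{0} → Ordinal.{0})
    (β₁ : Ordinal.{0}) (g₁ : Ordinal.{0} → Ordinal.{0}) : Prop :=
  β₀ ≤ β₁ ∧ ∀ ξ < β₀, g₁ ξ = g₀ ξ

/-- Let `κ` be regular uncountable, `θ < κ` infinite regular, `S ⊆ κ` a set of limit
ordinals, `A_δ ⊆ δ` of cardinality `< θ` with `sup A_δ = δ`, and `h_δ : A_δ → θ`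
(for `δ ∈ S`).  If `⟨g_i : i < δ₀⟩` is a `≤`-increasing sequence of conditions of
`Q^{S,θ}_{Ā,h̄}` with `δ₀ < κ` limit such that the supremum of the domains is not in `S`,
then the union of the `g_i` is a condition, hence an upper bound of the sequence. -/
theorem stmt13 (κ θ : Cardinal.{0}) (hκreg : κ.IsRegular) (hκunc : Cardinal.aleph0 < κ)
    (hθreg : θ.IsRegular) (hθinf : Cardinal.aleph0 ≤ θ) (hθκ : θ < κ)
    (S : Set Ordinal.{0}) (hS : ∀ δ ∈ S, δ < κ.ord ∧ Order.IsSuccLimit δ)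
    (A : Ordinal.{0} → Set Ordinal.{0})
    (hA : ∀ δ ∈ S, (∀ ξ ∈ A δ, ξ < δ) ∧ Cardinal.mk (A δ) < Cardinal.lift.{1} θ ∧
      sSup (A δ) = δ)
    (h : Ordinal.{0} → Ordinal.{0} → Ordinal.{0})
    (hh : ∀ δ ∈ S, ∀ ξ ∈ A δ, h δ ξ < θ.ord)
    (δ₀ : Ordinal.{0}) (hlim : Order.IsSuccLimit δ₀) (hδ₀ : δ₀ < κ.ord)
    (β : Ordinal.{0} → Ordinal.{0}) (g : Ordinal.{0} → Ordinal.{0} → Ordinal.{0})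
    (hcond : ∀ i < δ₀, QSCond κ.ord θ.ord S A h (β i) (g i))
    (hmono : ∀ i j : Ordinal.{0}, i ≤ j → j < δ₀ → QSLe (β i) (g i) (β j) (g j))
    (hsup : sSup {x : Ordinal.{0} | ∃ i < δ₀, x = β i} ∉ S) :
    ∃ g' : Ordinal.{0} → Ordinal.{0},
      QSCond κ.ord θ.ord S A h (sSup {x : Ordinal.{0} | ∃ i < δ₀, x = β i}) g' ∧
      ∀ i < δ₀, QSLe (β i) (g i) (sSup {x : Ordinal.{0} | ∃ j < δ₀, x = β j}) g' := by
  classical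
  set s : Set Ordinal.{0} := {x : Ordinal.{0} | ∃ i < δ₀, x = β i} with hs
  have hne : s.Nonempty := ⟨β 0, 0, hlim.pos, rfl⟩
  have hbdd : BddAbove s := by
    have : s ⊆ β '' Set.Iio δ₀ := by
      rintro x ⟨i, hi, rfl⟩; exact ⟨i, hi, rfl⟩
    exact (Ordinal.bddAbove_of_small (s := β '' Set.Iio δ₀)).mono this
  -- compatibility
  have compat : ∀ i j ξ : Ordinal, i < δ₀ → j < δ₀ → ξ < β i → ξ < β j → g i ξ = g j ξ := by
    intro i j ξ hi hj hξi hξj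
    rcases le_total i j with hij | hij
    · exact ((hmono i j hij hj).2 ξ hξi).symm
    · exact (hmono j i hij hi).2 ξ hξj
  set g' : Ordinal.{0} → Ordinal.{0} := fun ξ =>
    if hξ : ∃ i, i < δ₀ ∧ ξ < β i then g hξ.choose ξ else 0 with hg'
  have key : ∀ i, i < δ₀ → ∀ ξ, ξ < β i → g' ξ = g i ξ := by
    intro i hi ξ hξ
    have hex : ∃ j, j < δ₀ ∧ ξ < β j := ⟨i, hi, hξ⟩
    simp only [hg', dif_pos hex]
    exact compat hex.choose i ξ hex.choose_spec.1 hi hex.choose_spec.2 hξ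
  have hle : ∀ i, i < δ₀ → β i ≤ sSup s := fun i hi => le_csSup hbdd ⟨i, hi, rfl⟩
  have hBlt : sSup s < κ.ord := by
    have h1 : sSup s ≤ Ordinal.bsup δ₀ (fun i _ => β i) := by
      apply csSup_le hne
      rintro x ⟨i, hi, rfl⟩
      exact Ordinal.le_bsup _ i hi
    refine h1.trans_lt (Ordinal.bsup_lt_ord ?_ fun i hi => (hcond i hi).1)
    rw [hκreg.cof_eq]
    exact Cardinal.lt_ord.1 hδ₀
  have hexlt : ∀ ξ, ξ < sSup s → ∃ i, i < δ₀ ∧ ξ < β i := by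
    intro ξ hξ
    obtain ⟨x, ⟨i, hi, rfl⟩, hx⟩ := exists_lt_of_lt_csSup hne hξ
    exact ⟨i, hi, hx⟩
  refine ⟨g', ⟨hBlt, ?_, ?_⟩, ?_⟩
  · intro ξ hξ
    obtain ⟨i, hi, hξi⟩ := hexlt ξ hξ
    rw [key i hi ξ hξi]
    exact (hcond i hi).2.1 ξ hξi
  · intro δ hδ hδle
    have hδlt : δ < sSup s := lt_of_le_of_ne hδle (by rintro rfl; exact hsup hδ)
    obtain ⟨i, hi, hδi⟩ := hexlt δ hδlt
    obtain ⟨γ, hγ, hγ'⟩ := (hcond i hi).2.2 δ hδ hδi.le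
    refine ⟨γ, hγ, fun ξ hξA hξne => ?_⟩
    apply hγ' ξ hξA
    have hξδ : ξ < δ := (hA δ hδ).1 ξ hξA
    rwa [key i hi ξ (hξδ.trans hδi)] at hξne
  · intro i hi
    exact ⟨hle i hi, fun ξ hξ => key i hi ξ hξ⟩
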